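/- For any nonnegative symmetric Ŝ with optimal 2-cut set C*, the matrix F with F_1 = 1_{C*} and F_l = α_l·1_{V∖C*} for l=2,...,k, where α_l > 0 and ∑_{l=2}^k α_l = 1, is feasible for the simplex-constrained problem and its objective value ∑_{l=1}^k TV(F_l)/S(F_l) equals k · cut(C*, V∖C*)/Ŝ(C*); moreover, rounding F by row-wise argmax yields at most 2 nonempty sets, hence not a k-partition when k > 2. -/

import Mathlib

open Finset

/-- Lovasz extension of a set function `Sh` on `V = Fin n`. -/
noncomputable def lovasz {n : ℕ} (Sh : Finset (Fin n) → ℝ) (f : Fin n → ℝ) : ℝ :=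
  ∑ i : Fin n,
    f (Tuple.sort f i) *
      (Sh (if (i : ℕ) = 0 then Finset.univ
            else Finset.univ.filter
              (fun j => f (Tuple.sort f ⟨(i : ℕ) - 1, lt_of_le_of_lt (Nat.sub_le _ _) i.isLt⟩) < f j))
        - Sh (Finset.univ.filter (fun j => f (Tuple.sort f i) < f j)))

/-- cut(A,B) = ∑_{i∈A, j∈B} w_{ij}. -/
noncomputable def cutF {n : ℕ} (W : Matrix (Fin n) (Fin n) ℝ) (A B : Finset (Fin n)) : ℝ :=
  ∑ i ∈ A, ∑ j ∈ B, W i j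

/-- Total variation TV(f) = (1/2) ∑_{i,j} w_{ij} |f_i - f_j|. -/
noncomputable def tv {n : ℕ} (W : Matrix (Fin n) (Fin n) ℝ) (f : Fin n → ℝ) : ℝ :=
  (1 / 2) * ∑ i : Fin n, ∑ j : Fin n, W i j * |f i - f j|

/-- Indicator vector of a set. -/
noncomputable def indic {n : ℕ} (A : Finset (Fin n)) : Fin n → ℝ :=
  fun i => if i ∈ A then 1 else 0

lemma cutF_symm {n : ℕ} (W : Matrix (Fin n) (Fin n) ℝ) (hWsym : ∀ i j, W i j = W j i)
    (A B : Finset (Fin n)) : cutF W A B = cutF W B A := by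
  unfold cutF
  refine Finset.sum_comm.trans ?_
  exact Finset.sum_congr rfl fun j _ => Finset.sum_congr rfl fun i _ => hWsym i j

lemma tv_scaled_indic {n : ℕ} (W : Matrix (Fin n) (Fin n) ℝ)
    (hWsym : ∀ i j, W i j = W j i) (A : Finset (Fin n)) (c : ℝ) (hc : 0 ≤ c) :
    tv W (fun i => c * indic A i) = c * cutF W A Aᶜ := by
  have hval : ∀ j, c * indic A j = if j ∈ A then c else 0 := by
    intro j; simp [indic, mul_ite]
  unfold tv
  rw [← Finset.sum_add_sum_compl A]
  have h1 : ∑ i ∈ A, ∑ j : Fin n, W i j * |c * indic A i - c * indic A j|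
      = c * cutF W A Aᶜ := by
    rw [cutF, Finset.mul_sum]
    refine Finset.sum_congr rfl fun i hi => ?_
    rw [← Finset.sum_add_sum_compl A (fun j => W i j * |c * indic A i - c * indic A j|)]
    have hz : ∑ j ∈ A, W i j * |c * indic A i - c * indic A j| = 0 := by
      refine Finset.sum_eq_zero fun j hj => ?_
      rw [hval, hval, if_pos hi, if_pos hj]; simp
    rw [hz, zero_add, Finset.mul_sum]
    refine Finset.sum_congr rfl fun j hj => ?_
    rw [hval, hval, if_pos hi, if_neg (Finset.mem_compl.mp hj), sub_zero, abs_of_nonneg hc]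
    ring
  have h2 : ∑ i ∈ Aᶜ, ∑ j : Fin n, W i j * |c * indic A i - c * indic A j|
      = c * cutF W Aᶜ A := by
    rw [cutF, Finset.mul_sum]
    refine Finset.sum_congr rfl fun i hi => ?_
    rw [← Finset.sum_add_sum_compl A (fun j => W i j * |c * indic A i - c * indic A j|)]
    have hz : ∑ j ∈ Aᶜ, W i j * |c * indic A i - c * indic A j| = 0 := by
      refine Finset.sum_eq_zero fun j hj => ?_
      rw [hval, hval, if_neg (Finset.mem_compl.mp hi), if_neg (Finset.mem_compl.mp hj)]; simp
    rw [hz, add_zero, Finset.mul_sum]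
    refine Finset.sum_congr rfl fun j hj => ?_
    rw [hval, hval, if_neg (Finset.mem_compl.mp hi), if_pos hj, zero_sub, abs_neg,
      abs_of_nonneg hc]
    ring
  rw [h1, h2, cutF_symm W hWsym Aᶜ A]
  ring

lemma lovasz_scaled_indic {n : ℕ} (Sh : Finset (Fin n) → ℝ) (h0 : Sh ∅ = 0)
    (A : Finset (Fin n)) (hA : A.Nonempty) (hAp : A ≠ Finset.univ)
    (c : ℝ) (hc : 0 < c) :
    lovasz Sh (fun i => c * indic A i) = c * Sh A := by
  set f : Fin n → ℝ := fun i => c * indic A i with hf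
  have hval : ∀ j, f j = if j ∈ A then c else 0 := by
    intro j; simp [hf, indic, mul_ite]
  have hle : ∀ j, f j ≤ c := by
    intro j; rw [hval]; split
    · exact le_refl c
    · exact hc.le
  have hge : ∀ j, 0 ≤ f j := by
    intro j; rw [hval]; split
    · exact hc.le
    · exact le_refl 0
  set σ := Tuple.sort f with hσ
  have hmono : Monotone (f ∘ σ) := Tuple.monotone_sort f
  set m := Aᶜ.card with hm
  have hnpos : 0 < n := by
    obtain ⟨a, _⟩ := hA
    exact a.pos
  have hm0 : 0 < m := by
    rw [hm, Finset.card_pos]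
    rw [Finset.nonempty_iff_ne_empty]
    intro h
    exact hAp (by simpa using congrArg compl h)
  have hmn : m < n := by
    rw [hm, Finset.card_compl, Fintype.card_fin]
    exact Nat.sub_lt hnpos (Finset.card_pos.mpr hA)
  have hZ : (Finset.univ.filter (fun i => σ i ∉ A)).card = m := by
    rw [hm]
    apply Finset.card_bij (fun i _ => σ i)
    · intro a ha
      simp only [Finset.mem_filter, Finset.mem_univ, true_and] at ha
      exact Finset.mem_compl.mpr ha
    · intro a _ b _ h
      exact σ.injective h
    · intro b hb
      refine ⟨σ.symm b, ?_, by simp⟩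
      simp only [Finset.mem_filter, Finset.mem_univ, true_and, Equiv.apply_symm_apply]
      exact Finset.mem_compl.mp hb
  have key : ∀ i : Fin n, f (σ i) = if (i : ℕ) < m then 0 else c := by
    intro i
    by_cases him : (i : ℕ) < m
    · rw [if_pos him]
      by_contra hne
      have hci : σ i ∈ A := by
        by_contra h
        exact hne (by rw [hval, if_neg h])
      have hsub : (Finset.univ.filter (fun j => σ j ∉ A)) ⊆ Finset.Iio i := by
        intro j hj
        rw [Finset.mem_Iio]
        by_contra hle'
        push_neg at hle'
        have hmle := hmono hle'
        have hji : σ j ∉ A := (Finset.mem_filter.mp hj).2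
        simp only [Function.comp_apply] at hmle
        rw [hval (σ i), if_pos hci, hval (σ j), if_neg hji] at hmle
        exact absurd hmle (not_le.mpr hc)
      have hcard := Finset.card_le_card hsub
      rw [hZ, Fin.card_Iio] at hcard
      omega
    · rw [if_neg him]
      push_neg at him
      by_contra hne
      have hci : σ i ∉ A := by
        intro h
        exact hne (by rw [hval, if_pos h])
      have hsub : Finset.Iic i ⊆ Finset.univ.filter (fun j => σ j ∉ A) := by
        intro j hj
        rw [Finset.mem_Iic] at hj
        have hmle := hmono hj
        simp only [Function.comp_apply] at hmle
        rw [Finset.mem_filter]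
        refine ⟨Finset.mem_univ _, ?_⟩
        intro hjA
        rw [hval (σ j), if_pos hjA, hval (σ i), if_neg hci] at hmle
        exact absurd hmle (not_le.mpr hc)
      have hcard := Finset.card_le_card hsub
      rw [hZ, Fin.card_Iic] at hcard
      omega
  have hfil0 : Finset.univ.filter (fun j => (0:ℝ) < f j) = A := by
    ext j
    simp only [Finset.mem_filter, Finset.mem_univ, true_and, hval]
    by_cases hj : j ∈ A <;> simp [hj, hc]
  have hfilc : Finset.univ.filter (fun j => c < f j) = ∅ := by
    rw [Finset.filter_eq_empty_iff]
    intro j _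
    exact not_lt.mpr (hle j)
  have hfilA : ∀ i : Fin n, (i : ℕ) < m →
      Finset.univ.filter (fun j => f (σ i) < f j) = A := by
    intro i him
    have h1 : f (σ i) = 0 := by rw [key, if_pos him]
    simp only [h1]
    exact hfil0
  have hfilE : ∀ i : Fin n, m ≤ (i : ℕ) →
      Finset.univ.filter (fun j => f (σ i) < f j) = ∅ := by
    intro i him
    have h1 : f (σ i) = c := by rw [key, if_neg (not_lt.mpr him)]
    simp only [h1]
    exact hfilc
  show (∑ i : Fin n,
    f (Tuple.sort f i) *
      (Sh (if (i : ℕ) = 0 then Finset.univ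
            else Finset.univ.filter
              (fun j => f (Tuple.sort f ⟨(i : ℕ) - 1, lt_of_le_of_lt (Nat.sub_le _ _) i.isLt⟩) < f j))
        - Sh (Finset.univ.filter (fun j => f (Tuple.sort f i) < f j)))) = c * Sh A
  rw [← hσ]
  refine (Finset.sum_eq_single_of_mem (⟨m, hmn⟩ : Fin n) (Finset.mem_univ _) ?_).trans ?_
  · intro b _ hb
    rcases Nat.lt_trichotomy (b : ℕ) m with h | h | h
    · rw [key b, if_pos h, zero_mul]
    · exact absurd (Fin.ext h) hb
    · have h1 : ¬ ((b : ℕ) < m) := by omega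
      rw [key b, if_neg h1, if_neg (by omega : ¬ ((b : ℕ) = 0))]
      rw [hfilE ⟨(b : ℕ) - 1, lt_of_le_of_lt (Nat.sub_le _ _) b.isLt⟩
          (by exact Nat.le_sub_one_of_lt h), hfilc, sub_self, mul_zero]
  · rw [hfilE ⟨m, hmn⟩ (by exact le_refl m),
      hfilA ⟨((⟨m, hmn⟩ : Fin n) : ℕ) - 1,
          lt_of_le_of_lt (Nat.sub_le _ _) (⟨m, hmn⟩ : Fin n).isLt⟩
        (by exact Nat.sub_lt hm0 one_pos),
      key ⟨m, hmn⟩,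
      if_neg (show ¬((⟨m, hmn⟩ : Fin n) : ℕ) < m from lt_irrefl m),
      if_neg (show ¬((⟨m, hmn⟩ : Fin n) : ℕ) = 0 from hm0.ne'),
      h0, sub_zero]

/-- For a symmetric balancing function and an optimal 2-cut set C*, the matrix
with first column 1_{C*} and remaining columns α_l·1_{V∖C*} is feasible for the
simplex-constrained problem, has objective k·cut(C*,V∖C*)/Ŝ(C*), and any
(row-consistent) argmax rounding yields at most two nonempty sets. -/
theorem degenerate_solution_symmetric {n k : ℕ} [NeZero k] (hk : 2 ≤ k)
    (W : Matrix (Fin n) (Fin n) ℝ)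
    (hW : ∀ i j, 0 ≤ W i j) (hWsym : ∀ i j, W i j = W j i)
    (Sh : Finset (Fin n) → ℝ) (h0 : Sh ∅ = 0) (hnn : ∀ A, 0 ≤ Sh A)
    (hsym : ∀ A : Finset (Fin n), Sh A = Sh Aᶜ)
    (hpos : ∀ C : Finset (Fin n), C.Nonempty → C ≠ Finset.univ → 0 < Sh C)
    (Cs : Finset (Fin n)) (hCne : Cs.Nonempty) (hCp : Cs ≠ Finset.univ)
    (hmin : ∀ C : Finset (Fin n), C.Nonempty → C ≠ Finset.univ →
      cutF W Cs Csᶜ / Sh Cs ≤ cutF W C Cᶜ / Sh C)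
    (α : Fin k → ℝ) (hα : ∀ l, l ≠ 0 → 0 < α l)
    (hαsum : ∑ l ∈ Finset.univ.filter (fun l => l ≠ (0 : Fin k)), α l = 1)
    (F : Fin n → Fin k → ℝ)
    (hF0 : ∀ i, F i 0 = indic Cs i)
    (hFl : ∀ i l, l ≠ 0 → F i l = α l * indic Csᶜ i) :
    (∀ i l, 0 ≤ F i l) ∧ (∀ i, ∑ l, F i l = 1) ∧
    (∑ l, tv W (fun i => F i l) / lovasz Sh (fun i => F i l)) =
      k * (cutF W Cs Csᶜ / Sh Cs) ∧
    (∀ g : Fin n → Fin k,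
      (∀ i l, F i l ≤ F i (g i)) →
      (∀ i i', (∀ l, F i l = F i' l) → g i = g i') →
      ∃ l₁ l₂ : Fin k, ∀ i, g i = l₁ ∨ g i = l₂) := by
  have hCsc_ne : Csᶜ.Nonempty := by
    rw [Finset.nonempty_iff_ne_empty]
    intro h
    exact hCp (by simpa using congrArg compl h)
  have hCsc_p : Csᶜ ≠ Finset.univ := by
    intro h
    obtain ⟨a, ha⟩ := hCne
    have : a ∈ Csᶜ := h ▸ Finset.mem_univ a
    exact (Finset.mem_compl.mp this) ha
  have hnonneg : ∀ i l, 0 ≤ F i l := by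
    intro i l
    by_cases hl : l = 0
    · subst hl
      rw [hF0]
      unfold indic
      split
      · exact zero_le_one
      · exact le_refl 0
    · rw [hFl i l hl]
      apply mul_nonneg (hα l hl).le
      unfold indic
      split
      · exact zero_le_one
      · exact le_refl 0
  refine ⟨hnonneg, ?_, ?_, ?_⟩
  · -- row sums
    intro i
    rw [← Finset.add_sum_erase _ _ (Finset.mem_univ (0 : Fin k))]
    by_cases hi : i ∈ Cs
    · have h1 : F i 0 = 1 := by rw [hF0]; simp [indic, hi]
      have h2 : ∑ l ∈ Finset.univ.erase (0 : Fin k), F i l = 0 := by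
        refine Finset.sum_eq_zero fun l hl => ?_
        rw [hFl i l (Finset.mem_erase.mp hl).1]
        simp [indic, hi]
      rw [h1, h2, add_zero]
    · have h1 : F i 0 = 0 := by rw [hF0]; simp [indic, hi]
      have h2 : ∑ l ∈ Finset.univ.erase (0 : Fin k), F i l = 1 := by
        rw [← Finset.filter_ne' Finset.univ (0 : Fin k)] at *
        rw [← hαsum]
        refine Finset.sum_congr rfl fun l hl => ?_
        rw [hFl i l (Finset.mem_filter.mp hl).2]
        simp [indic, hi]
      rw [h1, h2, zero_add]
  · -- objective value
    have hterm : ∀ l : Fin k,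
        tv W (fun i => F i l) / lovasz Sh (fun i => F i l) = cutF W Cs Csᶜ / Sh Cs := by
      intro l
      by_cases hl : l = 0
      · subst hl
        have heq : (fun i => F i 0) = (fun i => (1:ℝ) * indic Cs i) := by
          funext i
          rw [hF0, one_mul]
        rw [heq, tv_scaled_indic W hWsym Cs 1 zero_le_one,
          lovasz_scaled_indic Sh h0 Cs hCne hCp 1 one_pos, one_mul, one_mul]
      · have heq : (fun i => F i l) = (fun i => α l * indic Csᶜ i) := by
          funext i
          exact hFl i l hl
        rw [heq, tv_scaled_indic W hWsym Csᶜ (α l) (hα l hl).le,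
          lovasz_scaled_indic Sh h0 Csᶜ hCsc_ne hCsc_p (α l) (hα l hl),
          mul_div_mul_left _ _ (hα l hl).ne', compl_compl,
          cutF_symm W hWsym Csᶜ Cs, ← hsym Cs]
    simp only [hterm]
    rw [Finset.sum_const, Finset.card_univ, Fintype.card_fin, nsmul_eq_mul]
  · -- rounding
    intro g hg hcons
    obtain ⟨i0, hi0⟩ := hCsc_ne
    have hi0' : i0 ∉ Cs := Finset.mem_compl.mp hi0
    refine ⟨0, g i0, fun i => ?_⟩
    by_cases hi : i ∈ Cs
    · left
      by_contra hne
      have h1 : F i (g i) = 0 := by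
        rw [hFl i (g i) hne]
        simp [indic, hi]
      have h2 := hg i 0
      rw [hF0, h1] at h2
      simp only [indic, if_pos hi] at h2
      linarith
    · right
      apply hcons
      intro l
      by_cases hl : l = 0
      · subst hl
        rw [hF0, hF0]
        simp [indic, hi, hi0']
      · rw [hFl i l hl, hFl i0 l hl]
        simp [indic, hi, hi0']
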